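/- Pruned segment neighbourhood pruning criterion: if integers 1 ≤ r < s are such that G^s(r, μ) > G^s(μ) for every μ ∈ ℝ, then for every integer t > s and every μ ∈ ℝ one has G^t(r, μ) > G^t(μ); consequently the candidate last-changepoint index r can never again be optimal for any fixed segment parameter μ at any later time t, and may be permanently discarded. -/
import Mathlib


/-- `psnG y γ F s r μ` is the cost `G^s(r, μ) = F(r) + ∑_{i=r}^{s-1} γ(y_i, μ)` of
segmentations whose final segment starts at `r` and is parameterized by `μ`,
with the convention `G^s(s, μ) = F(s)`. -/
noncomputable def psnG (y : ℕ → ℝ) (γ : ℝ → ℝ → ℝ) (F : ℕ → ℝ)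
    (s r : ℕ) (μ : ℝ) : ℝ :=
  if r = s then F s else F r + ∑ i ∈ Finset.Ico r s, γ (y i) μ

/-- `psnGmin y γ F s μ = G^s(μ)`, the minimum of `G^s(r, μ)` over `1 ≤ r ≤ s`. -/
noncomputable def psnGmin (y : ℕ → ℝ) (γ : ℝ → ℝ → ℝ) (F : ℕ → ℝ)
    (s : ℕ) (μ : ℝ) : ℝ :=
  sInf {v : ℝ | ∃ r : ℕ, 1 ≤ r ∧ r ≤ s ∧ v = psnG y γ F s r μ}

lemma psnG_set_eq (y : ℕ → ℝ) (γ : ℝ → ℝ → ℝ) (F : ℕ → ℝ) (s : ℕ) (μ : ℝ) :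
    {v : ℝ | ∃ r : ℕ, 1 ≤ r ∧ r ≤ s ∧ v = psnG y γ F s r μ} =
      ↑((Finset.Icc 1 s).image (fun r => psnG y γ F s r μ)) := by
  ext v
  simp [Finset.mem_Icc, eq_comm, and_assoc]

lemma psnG_extend (y : ℕ → ℝ) (γ : ℝ → ℝ → ℝ) (F : ℕ → ℝ) {r s t : ℕ}
    (h1 : r ≤ s) (h2 : s < t) (μ : ℝ) :
    psnG y γ F t r μ = psnG y γ F s r μ + ∑ i ∈ Finset.Ico s t, γ (y i) μ := by
  rcases eq_or_lt_of_le h1 with rfl | hlt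
  · simp [psnG, Nat.ne_of_lt h2]
  · have hrt : r < t := lt_trans hlt h2
    simp only [psnG, Nat.ne_of_lt hlt, Nat.ne_of_lt hrt, if_false]
    rw [← Finset.sum_Ico_consecutive _ (le_of_lt hlt) (le_of_lt h2)]
    ring

/-- Pruned segment neighbourhood pruning criterion: if `1 ≤ r < s` and
`G^s(r, μ) > G^s(μ)` for every `μ`, then for every `t > s` and every `μ`,
`G^t(r, μ) > G^t(μ)`; hence `r` can never again be optimal and may be
permanently discarded. -/
theorem psn_pruning_criterion (y : ℕ → ℝ) (γ : ℝ → ℝ → ℝ) (F : ℕ → ℝ)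
    (r s : ℕ) (hr : 1 ≤ r) (hrs : r < s)
    (h : ∀ μ : ℝ, psnGmin y γ F s μ < psnG y γ F s r μ) :
    ∀ t : ℕ, s < t → ∀ μ : ℝ, psnGmin y γ F t μ < psnG y γ F t r μ := by
  intro t hst μ
  -- the minimum at time s is attained at some r'
  have hne : (1 : ℕ) ≤ s := le_trans hr (le_of_lt hrs)
  have hmem : psnGmin y γ F s μ ∈
      {v : ℝ | ∃ r : ℕ, 1 ≤ r ∧ r ≤ s ∧ v = psnG y γ F s r μ} := by
    apply Set.Nonempty.csInf_mem
    · exact ⟨psnG y γ F s s μ, s, hne, le_refl s, rfl⟩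
    · rw [psnG_set_eq]; exact Finset.finite_toSet _
  obtain ⟨r', hr'1, hr's, hval⟩ := hmem
  have hlt : psnG y γ F s r' μ < psnG y γ F s r μ := hval ▸ h μ
  have hr't : psnG y γ F t r' μ < psnG y γ F t r μ := by
    rw [psnG_extend y γ F hr's hst μ, psnG_extend y γ F (le_of_lt hrs) hst μ]
    linarith
  have hle : psnGmin y γ F t μ ≤ psnG y γ F t r' μ := by
    apply csInf_le
    · rw [psnG_set_eq]
      exact (Finset.image _ _).finite_toSet.bddBelow
    · exact ⟨r', hr'1, le_trans hr's (le_of_lt hst), rfl⟩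
  linarith
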